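/- Let K be an algebraically closed field of characteristic p > 0, and let n ≥ 3 be an integer with p ∤ n and ζ a primitive n-th root of unity in K. Let V ⊆ K be a finite F_p(ζ²)-subspace with F_p-basis α₁, ..., α_r, and let a ∈ K. Then the subgroup of SL₂(K) generated by the matrices [[1, α_i],[0,1]] (1 ≤ i ≤ r) and τ = [[ζ, a],[0, ζ^{-1}]] has order n · p^r, with normal elementary abelian p-Sylow subgroup {[[1,v],[0,1]] : v ∈ V} and cyclic quotient of order n. -/

import Mathlib

open Matrix


section UTdef
variable {K : Type*} [Field K]

def UT (d b : K) (hd : d ≠ 0) : Matrix.SpecialLinearGroup (Fin 2) K :=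
  ⟨!![d, b; 0, d⁻¹], by simp [Matrix.det_fin_two_of, mul_inv_cancel₀ hd]⟩

theorem UT_coe (d b : K) (hd : d ≠ 0) :
    (UT d b hd : Matrix (Fin 2) (Fin 2) K) = !![d, b; 0, d⁻¹] := rfl

theorem UT_congr {d b e c : K} {hd : d ≠ 0} {he : e ≠ 0} (h1 : d = e) (h2 : b = c) :
    UT d b hd = UT e c he := by subst h1; subst h2; rfl

theorem UT_mul (d b e c : K) (hd : d ≠ 0) (he : e ≠ 0) :
    UT d b hd * UT e c he = UT (d * e) (d * c + b * e⁻¹) (mul_ne_zero hd he) := by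
  apply Subtype.ext
  simp only [Matrix.SpecialLinearGroup.coe_mul, UT_coe]
  rw [Matrix.mul_fin_two]
  ext i j
  fin_cases i <;> fin_cases j <;> simp [mul_inv, mul_comm]

theorem UT_one : UT (1 : K) 0 one_ne_zero = 1 := by
  apply Subtype.ext
  simp only [UT_coe, Matrix.SpecialLinearGroup.coe_one]
  ext i j
  fin_cases i <;> fin_cases j <;> simp [Matrix.one_apply]

theorem UT_inv (d b : K) (hd : d ≠ 0) :
    (UT d b hd)⁻¹ = UT d⁻¹ (-b) (inv_ne_zero hd) := by
  apply inv_eq_of_mul_eq_one_right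
  rw [UT_mul]
  rw [show UT (d * d⁻¹) (d * -b + b * d⁻¹⁻¹) (mul_ne_zero hd (inv_ne_zero hd))
      = UT (1:K) 0 one_ne_zero from
    UT_congr (mul_inv_cancel₀ hd) (by rw [inv_inv]; ring)]
  exact UT_one

theorem UT_entry00 (d b : K) (hd : d ≠ 0) :
    (UT d b hd : Matrix (Fin 2) (Fin 2) K) 0 0 = d := by simp [UT_coe]

theorem UT_entry01 (d b : K) (hd : d ≠ 0) :
    (UT d b hd : Matrix (Fin 2) (Fin 2) K) 0 1 = b := by simp [UT_coe]

theorem u_mul (x y : K) :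
    UT (1:K) x one_ne_zero * UT 1 y one_ne_zero = UT 1 (x + y) one_ne_zero :=
  (UT_mul 1 x 1 y one_ne_zero one_ne_zero).trans
    (UT_congr (by ring) (by rw [inv_one]; ring))

theorem u_inv (x : K) : (UT (1:K) x one_ne_zero)⁻¹ = UT 1 (-x) one_ne_zero :=
  (UT_inv 1 x one_ne_zero).trans (UT_congr inv_one rfl)

theorem u_pow (x : K) (m : ℕ) :
    UT (1:K) x one_ne_zero ^ m = UT 1 ((m : K) * x) one_ne_zero := by
  induction m with
  | zero => simpa using UT_one.symm.trans (UT_congr rfl (by simp))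
  | succ m ih =>
      rw [pow_succ, ih, u_mul]
      exact UT_congr rfl (by push_cast; ring)

theorem u_sum_mem {ι : Type*} (H : Subgroup (Matrix.SpecialLinearGroup (Fin 2) K))
    (s : Finset ι) (f : ι → K) (hf : ∀ i ∈ s, UT (1:K) (f i) one_ne_zero ∈ H) :
    UT (1:K) (∑ i ∈ s, f i) one_ne_zero ∈ H := by
  classical
  induction s using Finset.induction_on with
  | empty => simpa [UT_one] using H.one_mem
  | insert _ _ hns ih =>
      rename_i a s
      rw [Finset.sum_insert hns, ← u_mul]
      exact H.mul_mem (hf a (Finset.mem_insert_self a s))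
        (ih fun i hi => hf i (Finset.mem_insert_of_mem hi))

theorem UT_conj (d b v : K) (hd : d ≠ 0) :
    UT d b hd * UT 1 v one_ne_zero * (UT d b hd)⁻¹ = UT 1 (d ^ 2 * v) one_ne_zero := by
  rw [UT_inv, UT_mul, UT_mul]
  exact UT_congr (by field_simp) (by rw [inv_inv, inv_one]; ring)

end UTdef


/-- Let `K` be algebraically closed of characteristic `p`, `n ≥ 3` with
`p ∤ n`, `ζ ∈ K` a primitive `n`-th root of unity, `V ⊆ K` an
`F_p(ζ²)`-stable subspace with `F_p`-basis `α₁, …, α_r`, and `a ∈ K`.  Then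
the subgroup of `SL₂(K)` generated by the matrices `[[1,αᵢ],[0,1]]` and
`τ = [[ζ,a],[0,ζ⁻¹]]` has order `n·p^r`, its `p`-Sylow subgroup
`{[[1,v],[0,1]] : v ∈ V}` is normal elementary abelian of order `p^r`, and
the quotient is cyclic of order `n`. -/
theorem group_G_n_pr_structure {K : Type*} [Field K] [IsAlgClosed K]
    (p : ℕ) [Fact p.Prime] [CharP K p] [Algebra (ZMod p) K]
    (n : ℕ) (hn : 3 ≤ n) (hpn : ¬ p ∣ n) (ζ : K) (hζ : IsPrimitiveRoot ζ n)
    (r : ℕ) (α : Fin r → K)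
    (hind : Function.Injective fun c : Fin r → ZMod p =>
      ∑ i, algebraMap (ZMod p) K (c i) * α i)
    (hVζ : ∀ v ∈ Set.range (fun c : Fin r → ZMod p =>
        ∑ i, algebraMap (ZMod p) K (c i) * α i),
      ζ ^ 2 * v ∈ Set.range (fun c : Fin r → ZMod p =>
        ∑ i, algebraMap (ZMod p) K (c i) * α i))
    (a : K)
    (G : Subgroup (Matrix.SpecialLinearGroup (Fin 2) K))
    (hG : G = Subgroup.closure
      {g : Matrix.SpecialLinearGroup (Fin 2) K |
        (∃ i : Fin r, (g : Matrix (Fin 2) (Fin 2) K) = !![1, α i; 0, 1]) ∨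
          (g : Matrix (Fin 2) (Fin 2) K) = !![ζ, a; 0, ζ⁻¹]}) :
    Nat.card G = n * p ^ r ∧
      ∃ Q : Subgroup (Matrix.SpecialLinearGroup (Fin 2) K),
        (Q : Set (Matrix.SpecialLinearGroup (Fin 2) K)) =
            {g : Matrix.SpecialLinearGroup (Fin 2) K |
              ∃ v ∈ Set.range (fun c : Fin r → ZMod p =>
                  ∑ i, algebraMap (ZMod p) K (c i) * α i),
                (g : Matrix (Fin 2) (Fin 2) K) = !![1, v; 0, 1]} ∧
          Q ≤ G ∧
          (∀ g ∈ G, ∀ q ∈ Q, g * q * g⁻¹ ∈ Q) ∧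
          (∀ q ∈ Q, q ^ p = 1) ∧
          (∀ q ∈ Q, ∀ q' ∈ Q, q * q' = q' * q) ∧
          Nat.card Q = p ^ r ∧
          ∃ τ ∈ G, orderOf τ = n ∧
            ∀ g ∈ G, ∃ q ∈ Q, ∃ k : ℕ, g = q * τ ^ k := by
  classical
  have hn0 : 0 < n := by omega
  haveI : NeZero n := ⟨by omega⟩
  set vmap : (Fin r → ZMod p) → K := fun c => ∑ i, algebraMap (ZMod p) K (c i) * α i
    with hvmap
  set Vs : Set K := Set.range vmap with hVs
  -- basic facts about Vs
  have hV0 : (0 : K) ∈ Vs := ⟨0, by simp [hvmap]⟩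
  have hVadd : ∀ v ∈ Vs, ∀ w ∈ Vs, v + w ∈ Vs := by
    rintro _ ⟨c, rfl⟩ _ ⟨c', rfl⟩
    exact ⟨c + c', by simp [hvmap, add_mul, Finset.sum_add_distrib]⟩
  have hVneg : ∀ v ∈ Vs, -v ∈ Vs := by
    rintro _ ⟨c, rfl⟩
    exact ⟨-c, by simp [hvmap, neg_mul, Finset.sum_neg_distrib]⟩
  have hVα : ∀ i, α i ∈ Vs := by
    intro i
    refine ⟨Pi.single i 1, ?_⟩
    simp [hvmap, Pi.single_apply, apply_ite, Finset.sum_ite_eq']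
  have hζ0 : ζ ≠ 0 := by
    intro h
    have := hζ.pow_eq_one
    rw [h, zero_pow (by omega)] at this
    exact zero_ne_one this
  have hζ2 : ζ ^ 2 ≠ 1 := hζ.pow_ne_one_of_pos_of_lt (by norm_num) (by omega)
  have hVfin : Vs.Finite := Set.finite_range _
  have hVdiv : ∀ v ∈ Vs, (ζ ^ 2)⁻¹ * v ∈ Vs := by
    haveI : Finite Vs := hVfin.to_subtype
    have hinj : Function.Injective (fun x : Vs => (⟨ζ ^ 2 * x, hVζ x x.2⟩ : Vs)) := by
      intro x y hxy
      have := congrArg (Subtype.val) hxy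
      exact Subtype.ext (mul_left_cancel₀ (pow_ne_zero 2 hζ0) this)
    have hsurj := Finite.surjective_of_injective hinj
    intro v hv
    obtain ⟨w, hw⟩ := hsurj ⟨v, hv⟩
    have hw' : ζ ^ 2 * (w : K) = v := congrArg Subtype.val hw
    have : (ζ ^ 2)⁻¹ * v = (w : K) := by
      rw [← hw']; field_simp
    rw [this]; exact w.2
  -- the generators
  set τ : Matrix.SpecialLinearGroup (Fin 2) K := UT ζ a hζ0 with hτ
  set u : K → Matrix.SpecialLinearGroup (Fin 2) K := fun v => UT 1 v one_ne_zero with hu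
  have hτG : τ ∈ G := by
    rw [hG]; exact Subgroup.subset_closure (Or.inr rfl)
  have huαG : ∀ i, u (α i) ∈ G := by
    intro i
    rw [hG]
    refine Subgroup.subset_closure (Or.inl ⟨i, ?_⟩)
    rw [hu]; simp [UT_coe, inv_one]
  -- algebraMap identification
  have halg : ∀ c : ZMod p, algebraMap (ZMod p) K c = ((c.val : ℕ) : K) := by
    intro c
    conv_lhs => rw [← ZMod.natCast_rightInverse c]
    rw [map_natCast]
  -- u of elements of Vs lies in G
  have huG : ∀ v ∈ Vs, u v ∈ G := by
    rintro _ ⟨c, rfl⟩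
    rw [hu, hvmap]
    refine u_sum_mem G Finset.univ _ ?_
    intro i _
    rw [halg]
    have : ((c i).val : K) * α i = (((c i).val : ℕ) : K) * α i := by norm_cast
    rw [show UT (1:K) ((((c i).val : ℕ) : K) * α i) one_ne_zero
        = UT 1 (α i) one_ne_zero ^ ((c i).val) from (u_pow (α i) (c i).val).symm]
    exact G.pow_mem (huαG i) _
  -- the subgroup Q
  refine
    letI Q : Subgroup (Matrix.SpecialLinearGroup (Fin 2) K) :=
      { carrier := {g | ∃ v ∈ Vs, g = u v}
        one_mem' := ⟨0, hV0, UT_one.symm⟩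
        mul_mem' := by
          rintro _ _ ⟨v, hv, rfl⟩ ⟨w, hw, rfl⟩
          exact ⟨v + w, hVadd v hv w hw, u_mul v w⟩
        inv_mem' := by
          rintro _ ⟨v, hv, rfl⟩
          exact ⟨-v, hVneg v hv, u_inv v⟩ }
    ?_
  have hQmem : ∀ g, g ∈ Q ↔ ∃ v ∈ Vs, g = u v := fun g => Iff.rfl
  have hQG : Q ≤ G := by
    rintro _ ⟨v, hv, rfl⟩
    exact huG v hv
  -- powers of τ
  have htaupow : ∀ k : ℕ, ∃ b, τ ^ k = UT (ζ ^ k) b (pow_ne_zero k hζ0) := by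
    intro k
    induction k with
    | zero => exact ⟨0, by rw [pow_zero, ← UT_one]; exact (UT_congr (pow_zero ζ).symm rfl)⟩
    | succ k ih =>
        obtain ⟨b, hb⟩ := ih
        refine ⟨ζ ^ k * a + b * ζ⁻¹, ?_⟩
        rw [pow_succ, hb, hτ, UT_mul]
        exact UT_congr (pow_succ ζ k).symm rfl
  have hconjτ : ∀ v, τ * u v * τ⁻¹ = u (ζ ^ 2 * v) := fun v => UT_conj ζ a v hζ0
  have hτinv' : τ⁻¹ = UT ζ⁻¹ (-a) (inv_ne_zero hζ0) := UT_inv ζ a hζ0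
  have hconjτinv : ∀ v, τ⁻¹ * u v * τ = u ((ζ ^ 2)⁻¹ * v) := by
    intro v
    have h := UT_conj ζ⁻¹ (-a) v (inv_ne_zero hζ0)
    rw [← hτinv', inv_inv] at h
    rw [h, hu]
    exact UT_congr rfl (by rw [inv_pow])
  -- τ has order n
  have hτn : τ ^ n = 1 := by
    obtain ⟨b, hb⟩ := htaupow n
    have hb' : τ ^ n = u b := by
      rw [hb, hu]
      exact UT_congr hζ.pow_eq_one rfl
    have hcomm : τ * τ ^ n * τ⁻¹ = τ ^ n := by group
    rw [hb', hconjτ] at hcomm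
    have hbb : ζ ^ 2 * b = b := by
      have := congrArg (fun g : Matrix.SpecialLinearGroup (Fin 2) K =>
        (g : Matrix (Fin 2) (Fin 2) K) 0 1) hcomm
      simpa [hu, UT_entry01] using this
    have hb0 : b = 0 := by
      by_contra hb0
      exact hζ2 (mul_right_cancel₀ hb0 (by simpa using hbb))
    rw [hb', hb0, hu, ← UT_one]
  have horder : orderOf τ = n := by
    refine Nat.dvd_antisymm (orderOf_dvd_of_pow_eq_one hτn) ?_
    obtain ⟨b, hb⟩ := htaupow (orderOf τ)
    refine hζ.dvd_of_pow_eq_one _ ?_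
    have h1 : τ ^ orderOf τ = 1 := pow_orderOf_eq_one τ
    rw [hb] at h1
    have := congrArg (fun g : Matrix.SpecialLinearGroup (Fin 2) K =>
      (g : Matrix (Fin 2) (Fin 2) K) 0 0) h1
    simpa [UT_entry00, Matrix.SpecialLinearGroup.coe_one, Matrix.one_apply] using this
  -- normality
  have hGnorm : G ≤ Subgroup.normalizer (Q : Set (Matrix.SpecialLinearGroup (Fin 2) K)) := by
    rw [hG]
    refine (Subgroup.closure_le _).mpr ?_
    rintro g (⟨i, hgi⟩ | hgτ)
    · have hgQ : g ∈ Q := by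
        refine ⟨α i, hVα i, ?_⟩
        apply Subtype.ext
        rw [hgi, hu, UT_coe, inv_one]
      exact Subgroup.le_normalizer hgQ
    · have hgτ' : g = τ := by
        apply Subtype.ext
        rw [hgτ, hτ, UT_coe]
      subst hgτ'
      rw [SetLike.mem_coe, Subgroup.mem_normalizer_iff]
      intro h
      constructor
      · rintro ⟨v, hv, rfl⟩
        exact ⟨ζ ^ 2 * v, hVζ v hv, hconjτ v⟩
      · rintro ⟨w, hw, hweq⟩
        refine ⟨(ζ ^ 2)⁻¹ * w, hVdiv w hw, ?_⟩
        have : h = τ⁻¹ * (τ * h * τ⁻¹) * τ := by group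
        rw [this, hweq, hconjτinv]
  have hnormal : ∀ g ∈ G, ∀ q ∈ Q, g * q * g⁻¹ ∈ Q := by
    intro g hg q hq
    exact (Subgroup.mem_normalizer_iff.mp (hGnorm hg) q).mp hq
  -- exponent p
  have hexp : ∀ q ∈ Q, q ^ p = 1 := by
    rintro _ ⟨v, hv, rfl⟩
    rw [hu, u_pow, CharP.cast_eq_zero K p, zero_mul, UT_one]
  -- commutativity
  have hcomm : ∀ q ∈ Q, ∀ q' ∈ Q, q * q' = q' * q := by
    rintro _ ⟨v, hv, rfl⟩ _ ⟨w, hw, rfl⟩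
    rw [hu]; rw [u_mul, u_mul, add_comm]
  -- cardinality of Q
  have hucoe01 : ∀ v : K, (u v : Matrix (Fin 2) (Fin 2) K) 0 1 = v := by
    intro v; rw [hu]; exact UT_entry01 1 v one_ne_zero
  have hcardQ : Nat.card Q = p ^ r := by
    have hbij : Function.Bijective
        (fun c : Fin r → ZMod p => (⟨u (vmap c), ⟨vmap c, ⟨c, rfl⟩, rfl⟩⟩ : Q)) := by
      constructor
      · intro c c' hcc
        have h1 : u (vmap c) = u (vmap c') := congrArg Subtype.val hcc
        have h2 : vmap c = vmap c' := by
          have := congrArg (fun g : Matrix.SpecialLinearGroup (Fin 2) K =>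
            (g : Matrix (Fin 2) (Fin 2) K) 0 1) h1
          simpa [hucoe01] using this
        exact hind h2
      · rintro ⟨g, v, ⟨c, rfl⟩, rfl⟩
        exact ⟨c, rfl⟩
    have := Nat.card_eq_of_bijective _ hbij
    rw [← this]
    simp [Nat.card_eq_fintype_card, ZMod.card]
  -- conjugation by powers of τ
  have hconjpow : ∀ (k : ℕ), ∀ q ∈ Q, τ ^ k * q * (τ ^ k)⁻¹ ∈ Q := by
    intro k
    induction k with
    | zero => intro q hq; simpa using hq
    | succ k ih =>
        intro q hq
        have key : τ ^ (k+1) * q * (τ ^ (k+1))⁻¹ = τ * (τ ^ k * q * (τ ^ k)⁻¹) * τ⁻¹ := by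
          rw [pow_succ]; group
        rw [key]
        obtain ⟨v, hv, hveq⟩ := ih q hq
        rw [hveq, hconjτ]
        exact ⟨ζ ^ 2 * v, hVζ v hv, rfl⟩
  -- decomposition
  have hT : ∀ g ∈ G, ∃ q ∈ Q, ∃ k : ℕ, g = q * τ ^ k := by
    letI T : Subgroup (Matrix.SpecialLinearGroup (Fin 2) K) :=
      { carrier := {g | ∃ q ∈ Q, ∃ k : ℕ, g = q * τ ^ k}
        one_mem' := ⟨1, Q.one_mem, 0, by simp⟩
        mul_mem' := by
          rintro _ _ ⟨q, hq, k, rfl⟩ ⟨q', hq', m, rfl⟩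
          exact ⟨q * (τ ^ k * q' * (τ ^ k)⁻¹), Q.mul_mem hq (hconjpow k q' hq'),
            k + m, by rw [pow_add]; group⟩
        inv_mem' := by
          rintro _ ⟨q, hq, k, rfl⟩
          have hτk : (τ ^ k)⁻¹ = τ ^ ((n - 1) * k) := by
            refine inv_eq_of_mul_eq_one_right ?_
            rw [← pow_add]
            have hkn : k + (n - 1) * k = n * k := by
              calc k + (n - 1) * k = (1 + (n - 1)) * k := by ring
                _ = n * k := by rw [add_comm, Nat.sub_add_cancel (by omega : 1 ≤ n)]
            rw [hkn, pow_mul, hτn, one_pow]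
          refine ⟨τ ^ ((n - 1) * k) * q⁻¹ * (τ ^ ((n - 1) * k))⁻¹,
            hconjpow _ _ (Q.inv_mem hq), (n - 1) * k, ?_⟩
          rw [_root_.mul_inv_rev, hτk]
          group
        }
    intro g hg
    have hGT : G ≤ T := by
      rw [hG]
      refine (Subgroup.closure_le _).mpr ?_
      rintro g (⟨i, hgi⟩ | hgτ)
      · refine ⟨u (α i), ⟨α i, hVα i, rfl⟩, 0, ?_⟩
        apply Subtype.ext
        rw [hgi, pow_zero, mul_one, hu, UT_coe, inv_one]
      · refine ⟨1, Q.one_mem, 1, ?_⟩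
        apply Subtype.ext
        rw [hgτ, pow_one, one_mul, hτ, UT_coe]
    exact hGT hg
  -- separation lemma
  have hτQ1 : ∀ d : ℕ, d < n → τ ^ d ∈ Q → d = 0 := by
    intro d hdn hdQ
    obtain ⟨v, hv, hveq⟩ := hdQ
    obtain ⟨b, hb⟩ := htaupow d
    have hζd : ζ ^ d = 1 := by
      have h1 : UT (ζ ^ d) b (pow_ne_zero d hζ0) = u v := hb ▸ hveq
      have := congrArg (fun g : Matrix.SpecialLinearGroup (Fin 2) K =>
        (g : Matrix (Fin 2) (Fin 2) K) 0 0) h1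
      simpa [UT_entry00, hu] using this
    exact Nat.eq_zero_of_dvd_of_lt (hζ.dvd_of_pow_eq_one d hζd) hdn
  have hsep : ∀ q q', q ∈ Q → q' ∈ Q → ∀ k m : ℕ, k ≤ m → m < n →
      q * τ ^ k = q' * τ ^ m → q = q' ∧ k = m := by
    intro q q' hq hq' k m hkm hmn heq
    have h2 : τ ^ m = τ ^ (m - k) * τ ^ k := by rw [← pow_add, Nat.sub_add_cancel hkm]
    rw [h2, ← mul_assoc] at heq
    have h3 : q = q' * τ ^ (m - k) := mul_right_cancel heq
    have h4 : τ ^ (m - k) = q'⁻¹ * q := by rw [h3]; group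
    have h5 : τ ^ (m - k) ∈ Q := h4 ▸ Q.mul_mem (Q.inv_mem hq') hq
    have h6 : m - k = 0 := hτQ1 _ (lt_of_le_of_lt (Nat.sub_le m k) hmn) h5
    exact ⟨by rw [h3, h6, pow_zero, mul_one], by omega⟩
  have hcardG : Nat.card G = n * p ^ r := by
    have hψ : Function.Bijective (fun x : Q × ZMod n =>
        (⟨(x.1 : Matrix.SpecialLinearGroup (Fin 2) K) * τ ^ ((x.2 : ZMod n).val),
          G.mul_mem (hQG x.1.2) (G.pow_mem hτG _)⟩ : G)) := by
      constructor
      · rintro ⟨⟨q1, hq1⟩, k1⟩ ⟨⟨q2, hq2⟩, k2⟩ hx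
        have hx' : q1 * τ ^ k1.val = q2 * τ ^ k2.val := congrArg Subtype.val hx
        have hres : q1 = q2 ∧ k1.val = k2.val := by
          rcases le_total k1.val k2.val with h | h
          · exact hsep q1 q2 hq1 hq2 _ _ h (ZMod.val_lt k2) hx'
          · have := hsep q2 q1 hq2 hq1 _ _ h (ZMod.val_lt k1) hx'.symm
            exact ⟨this.1.symm, this.2.symm⟩
        exact Prod.ext (Subtype.ext hres.1) (ZMod.val_injective n hres.2)
      · rintro ⟨g, hg⟩
        obtain ⟨q, hq, k, rfl⟩ := hT g hg
        refine ⟨(⟨q, hq⟩, (k : ZMod n)), ?_⟩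
        apply Subtype.ext
        show q * τ ^ ((k : ZMod n)).val = q * τ ^ k
        congr 1
        rw [ZMod.val_natCast, ← horder]
        exact pow_mod_orderOf τ k
    have h1 := Nat.card_eq_of_bijective _ hψ
    rw [← h1, Nat.card_prod, hcardQ, Nat.card_zmod]
    ring
  have hQcar : (Q : Set (Matrix.SpecialLinearGroup (Fin 2) K)) =
      {g : Matrix.SpecialLinearGroup (Fin 2) K |
        ∃ v ∈ Vs, (g : Matrix (Fin 2) (Fin 2) K) = !![1, v; 0, 1]} := by
    ext g
    simp only [SetLike.mem_coe, hQmem, Set.mem_setOf_eq]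
    constructor
    · rintro ⟨v, hv, rfl⟩
      exact ⟨v, hv, by rw [hu]; simp [UT_coe, inv_one]⟩
    · rintro ⟨v, hv, hveq⟩
      refine ⟨v, hv, Subtype.ext ?_⟩
      rw [hveq, hu]; simp [UT_coe, inv_one]
  exact ⟨hcardG, Q, hQcar, hQG, hnormal, hexp, hcomm, hcardQ, τ, hτG, horder, hT⟩
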